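/- (Affine factorization rank bound.) Let K and n be positive integers, let M^k ∈ ℝ^{2 × 3} and t^k ∈ ℝ² for k = 1,…,K, and let X_1,…,X_n ∈ ℝ³. Define the matrix D' ∈ ℝ^{2K × n} whose k-th 2 × n block (rows 2k−1 and 2k) has i-th column equal to M^k X_i + t^k. Then rank(D') ≤ 4. -/

import Mathlib

open Matrix BigOperators

/-- Affine factorization rank bound: the measurement matrix stacking the image
coordinates `M^k X_i + t^k` of `n` points over `K` images has rank at most 4. -/
theorem affine_factorization_rank_le_four (K n : ℕ) (hK : 0 < K) (hn : 0 < n)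
    (M : Fin K → Matrix (Fin 2) (Fin 3) ℝ) (t : Fin K → Fin 2 → ℝ)
    (X : Fin n → Fin 3 → ℝ)
    (D : Matrix (Fin K × Fin 2) (Fin n) ℝ)
    (hD : ∀ (k : Fin K) (r : Fin 2) (i : Fin n),
      D (k, r) i = (M k *ᵥ X i + t k) r) :
    D.rank ≤ 4 := by
  set P : Matrix (Fin K × Fin 2) (Fin 4) ℝ :=
    fun p => ![M p.1 p.2 0, M p.1 p.2 1, M p.1 p.2 2, t p.1 p.2] with hP
  set Q : Matrix (Fin 4) (Fin n) ℝ :=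
    fun j i => ![X i 0, X i 1, X i 2, 1] j with hQ
  have hfact : D = P * Q := by
    ext ⟨k, r⟩ i
    rw [hD, Matrix.mul_apply]
    simp [Matrix.mul_apply, Fin.sum_univ_four, hP, hQ, Matrix.mulVec,
      dotProduct, Fin.sum_univ_three, Pi.add_apply]
  calc D.rank = (P * Q).rank := by rw [hfact]
    _ ≤ P.rank := Matrix.rank_mul_le_left P Q
    _ ≤ 4 := by simpa using Matrix.rank_le_card_width P
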